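/- arXiv:1309.3376 — 3 statements merged into one kernel-verified Lean document; each statement's English description precedes it below -/
import Mathlib

section
/- Let A be a finite set and let P and Q be probability distributions on A. Then KL(P; Q) ≤ Σ_{x ∈ A} kl(P(x), Q(x)), where KL(P; Q) = Σ_{x ∈ A} P(x) log(P(x)/Q(x)) is the Kullback–Leibler divergence and kl(p, q) = p log(p/q) + (1 − p) log((1 − p)/(1 − q)) is the binary relative entropy. -/
open Real Set
open scoped ENNReal

/-- Binary relative entropy `kl(p, q)` (Kullback–Leibler divergence between `Bernoulli p`
and `Bernoulli q`), with the conventions `0 log 0 = 0` and `kl(p, q) = +∞` whenever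
`q ∈ {0,1}` and `p ≠ q`. -/
noncomputable def klBin (p q : ℝ) : ℝ≥0∞ :=
  if (q = 0 ∧ p ≠ 0) ∨ (q = 1 ∧ p ≠ 1) then ⊤
  else ENNReal.ofReal (p * Real.log (p / q) + (1 - p) * Real.log ((1 - p) / (1 - q)))

/-- Kullback–Leibler divergence `KL(P; Q) = Σ_x P(x) log (P(x)/Q(x))` between two
probability mass functions on a finite set, with the conventions `0 log 0 = 0` and
`p log(p/0) = +∞` for `p > 0` (so `KL = +∞` unless `P ≪ Q`). -/
noncomputable def klFin {A : Type*} [Fintype A] (P Q : A → ℝ) : ℝ≥0∞ :=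
  if ∀ a, Q a = 0 → P a = 0 then ENNReal.ofReal (∑ a, P a * Real.log (P a / Q a))
  else ⊤

/-- Gibbs' inequality for nonnegative vectors. -/
lemma gibbs_aux {A : Type*} [Fintype A] (u v : A → ℝ) (hu : ∀ a, 0 ≤ u a)
    (hv : ∀ a, 0 ≤ v a) (hac : ∀ a, v a = 0 → u a = 0)
    (hsum : ∑ a, v a ≤ ∑ a, u a) :
    0 ≤ ∑ a, u a * Real.log (u a / v a) := by
  have key : ∀ a, u a - v a ≤ u a * Real.log (u a / v a) := by
    intro a
    rcases eq_or_lt_of_le (hu a) with h | h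
    · simp only [← h, zero_mul, zero_sub, neg_nonpos]
      exact (hv a).trans (by simp [← h])
    · have hva : 0 < v a := (hv a).lt_of_ne fun h' => by
        have := hac a h'.symm; linarith
      have hlog := Real.log_le_sub_one_of_pos (show 0 < v a / u a from div_pos hva h)
      have hne : Real.log (u a / v a) = - Real.log (v a / u a) := by
        rw [← Real.log_inv, inv_div]
      rw [hne]
      have : v a / u a * u a = v a := div_mul_cancel₀ _ (ne_of_gt h)
      nlinarith
  calc (0:ℝ) ≤ ∑ a, (u a - v a) := by
        rw [Finset.sum_sub_distrib]; linarith
    _ ≤ _ := Finset.sum_le_sum (fun a _ => key a)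

lemma ofReal_sum_le' {A : Type*} (s : Finset A) (f : A → ℝ) :
    ENNReal.ofReal (∑ a ∈ s, f a) ≤ ∑ a ∈ s, ENNReal.ofReal (f a) := by
  classical
  induction s using Finset.induction with
  | empty => simp
  | insert _ _ h ih =>
      rw [Finset.sum_insert h, Finset.sum_insert h]
      exact (ENNReal.ofReal_add_le).trans (add_le_add_right ih _)

/-- **The KL divergence between distributions on a finite set is at most the sum of the
coordinatewise binary relative entropies:** `KL(P; Q) ≤ Σ_x kl(P(x), Q(x))`. -/
theorem klFin_le_sum_klBin {A : Type*} [Fintype A] (P Q : A → ℝ)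
    (hP : ∀ a, 0 ≤ P a) (hPsum : ∑ a, P a = 1)
    (hQ : ∀ a, 0 ≤ Q a) (hQsum : ∑ a, Q a = 1) :
    klFin P Q ≤ ∑ a, klBin (P a) (Q a) := by
  classical
  have hP1 : ∀ a, P a ≤ 1 := by
    intro a
    rw [← hPsum]
    exact Finset.single_le_sum (fun i _ => hP i) (Finset.mem_univ a)
  have hQ1 : ∀ a, Q a ≤ 1 := by
    intro a
    rw [← hQsum]
    exact Finset.single_le_sum (fun i _ => hQ i) (Finset.mem_univ a)
  by_cases hac : ∀ a, Q a = 0 → P a = 0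
  · by_cases htop : ∀ a, Q a = 1 → P a = 1
    · -- all klBin are finite
      have hbin : ∀ a, klBin (P a) (Q a) =
          ENNReal.ofReal (P a * Real.log (P a / Q a)
            + (1 - P a) * Real.log ((1 - P a) / (1 - Q a))) := by
        intro a
        rw [klBin, if_neg]
        rintro (⟨h0, h1⟩ | ⟨h0, h1⟩)
        · exact h1 (hac a h0)
        · exact h1 (htop a h0)
      rw [klFin, if_pos hac]
      calc ENNReal.ofReal (∑ a, P a * Real.log (P a / Q a))
          ≤ ENNReal.ofReal (∑ a, (P a * Real.log (P a / Q a)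
            + (1 - P a) * Real.log ((1 - P a) / (1 - Q a)))) := by
            apply ENNReal.ofReal_le_ofReal
            rw [Finset.sum_add_distrib]
            have := gibbs_aux (fun a => 1 - P a) (fun a => 1 - Q a)
              (fun a => by linarith [hP1 a]) (fun a => by linarith [hQ1 a])
              (fun a h => by have := htop a (by linarith); linarith)
              (by rw [Finset.sum_sub_distrib, Finset.sum_sub_distrib, hPsum, hQsum])
            simpa using by linarith [this]
        _ ≤ ∑ a, ENNReal.ofReal (P a * Real.log (P a / Q a)
            + (1 - P a) * Real.log ((1 - P a) / (1 - Q a))) := ofReal_sum_le' _ _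
        _ = ∑ a, klBin (P a) (Q a) := by
            exact Finset.sum_congr rfl (fun a _ => (hbin a).symm)
    · push_neg at htop
      obtain ⟨a, ha1, ha2⟩ := htop
      have : klBin (P a) (Q a) = ⊤ := by rw [klBin, if_pos (Or.inr ⟨ha1, ha2⟩)]
      calc klFin P Q ≤ ⊤ := le_top
        _ = klBin (P a) (Q a) := this.symm
        _ ≤ _ := Finset.single_le_sum (f := fun i => klBin (P i) (Q i)) (fun i _ => zero_le) (Finset.mem_univ a)
  · push_neg at hac
    obtain ⟨a, ha1, ha2⟩ := hac
    have : klBin (P a) (Q a) = ⊤ := by rw [klBin, if_pos (Or.inl ⟨ha1, ha2⟩)]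
    calc klFin P Q ≤ ⊤ := le_top
      _ = klBin (P a) (Q a) := this.symm
      _ ≤ _ := Finset.single_le_sum (f := fun i => klBin (P i) (Q i)) (fun i _ => zero_le) (Finset.mem_univ a)
end

section
/- Let A be a finite set with |A| ≥ 2 and let P and Q be probability distributions on A. Then Σ_{x ∈ A} kl(P(x), Q(x)) − KL(P; Q) = (|A| − 1) Σ_{x ∈ A} ((1 − P(x))/(|A| − 1)) log( ((1 − P(x))/(|A| − 1)) / ((1 − Q(x))/(|A| − 1)) ), and this quantity is non-negative. -/
open Real Set
open scoped ENNReal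

/-- Gibbs' inequality (real-valued). -/
lemma gibbs_aux_s15 {A : Type*} [Fintype A] (P Q : A → ℝ)
    (hP : ∀ a, 0 ≤ P a) (hQ : ∀ a, 0 ≤ Q a)
    (hPsum : ∑ a, P a = 1) (hQsum : ∑ a, Q a = 1)
    (habs : ∀ a, Q a = 0 → P a = 0) :
    0 ≤ ∑ a, P a * Real.log (P a / Q a) := by
  have key : ∀ a ∈ Finset.univ, P a - Q a ≤ P a * Real.log (P a / Q a) := by
    intro a _
    rcases eq_or_lt_of_le (hP a) with h0 | hpos
    · rw [← h0]; simpa using hQ a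
    · have hq : 0 < Q a := by
        rcases eq_or_lt_of_le (hQ a) with h0' | h; · exact absurd (habs a h0'.symm) (by linarith)
        exact h
      have hlog : Real.log (Q a / P a) ≤ Q a / P a - 1 :=
        Real.log_le_sub_one_of_pos (by positivity)
      have hneg : Real.log (Q a / P a) = -Real.log (P a / Q a) := by
        rw [Real.log_div hq.ne' hpos.ne', Real.log_div hpos.ne' hq.ne']; ring
      have hfs : P a * (Q a / P a - 1) = Q a - P a := by field_simp
      nlinarith [mul_le_mul_of_nonneg_left (hneg ▸ hlog) hpos.le]
  have := Finset.sum_le_sum key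
  rw [Finset.sum_sub_distrib, hPsum, hQsum] at this
  simpa using this

/-- Nonnegativity of the real binary relative entropy. -/
lemma klBin_real_nonneg (p q : ℝ) (hp0 : 0 ≤ p) (hp1 : p ≤ 1) (hq0 : 0 ≤ q) (hq1 : q ≤ 1)
    (h0 : q = 0 → p = 0) (h1 : q = 1 → p = 1) :
    0 ≤ p * Real.log (p / q) + (1 - p) * Real.log ((1 - p) / (1 - q)) := by
  have := gibbs_aux_s15 (A := Bool) (fun b => if b then p else 1 - p)
    (fun b => if b then q else 1 - q)
    (by intro b; cases b <;> simp <;> linarith)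
    (by intro b; cases b <;> simp <;> linarith)
    (by simp)
    (by simp)
    (by intro b; cases b <;> simp <;> intro h
        · have := h1 (by linarith); linarith
        · exact h0 h)
  simpa [Fintype.sum_bool] using this

/-- **Decomposition of the coordinatewise binary entropies:** on a finite set `A` with
`|A| ≥ 2`, `Σ_x kl(P(x), Q(x)) - KL(P; Q)` equals the non-negative quantity
`(|A|-1) Σ_x ((1-P(x))/(|A|-1)) log( ((1-P(x))/(|A|-1)) / ((1-Q(x))/(|A|-1)) )`
(the difference being expressed additively, in `ℝ≥0∞`:
`Σ_x kl(P(x),Q(x)) = KL(P;Q) + (|A|-1)·KL(P̃;Q̃)` where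
`P̃(x) = (1-P(x))/(|A|-1)`, `Q̃(x) = (1-Q(x))/(|A|-1)`). -/
theorem sum_klBin_sub_klFin_eq {A : Type*} [Fintype A] (hA : 2 ≤ Fintype.card A)
    (P Q : A → ℝ)
    (hP : ∀ a, 0 ≤ P a) (hPsum : ∑ a, P a = 1)
    (hQ : ∀ a, 0 ≤ Q a) (hQsum : ∑ a, Q a = 1) :
    (∑ a, klBin (P a) (Q a)) =
      klFin P Q + ((Fintype.card A : ℝ≥0∞) - 1) *
        klFin (fun a => (1 - P a) / ((Fintype.card A : ℝ) - 1))
          (fun a => (1 - Q a) / ((Fintype.card A : ℝ) - 1)) ∧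
    0 ≤ ((Fintype.card A : ℝ≥0∞) - 1) *
        klFin (fun a => (1 - P a) / ((Fintype.card A : ℝ) - 1))
          (fun a => (1 - Q a) / ((Fintype.card A : ℝ) - 1)) := by
  refine ⟨?_, zero_le⟩
  set n := Fintype.card A with hn
  have hn2 : (2 : ℝ) ≤ (n : ℝ) := by exact_mod_cast hA
  set c : ℝ := (n : ℝ) - 1 with hc
  have hcpos : 0 < c := by simp only [hc]; linarith
  have hP1 : ∀ a, P a ≤ 1 := fun a => hPsum ▸
    Finset.single_le_sum (fun i _ => hP i) (Finset.mem_univ a)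
  have hQ1 : ∀ a, Q a ≤ 1 := fun a => hQsum ▸
    Finset.single_le_sum (fun i _ => hQ i) (Finset.mem_univ a)
  -- the ENNReal coefficient
  have hcoef : ((n : ℝ≥0∞) - 1) = ENNReal.ofReal c := by
    rw [hc, ENNReal.ofReal_sub _ (by norm_num), ENNReal.ofReal_natCast, ENNReal.ofReal_one]
  by_cases hC1 : ∃ a, Q a = 0 ∧ P a ≠ 0
  · -- LHS and klFin P Q are both ⊤
    obtain ⟨a, hqa, hpa⟩ := hC1
    have hL : (∑ a, klBin (P a) (Q a)) = ⊤ := by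
      apply ENNReal.sum_eq_top.mpr
      refine ⟨a, Finset.mem_univ a, ?_⟩
      rw [klBin, if_pos]
      exact Or.inl ⟨hqa, hpa⟩
    have hR : klFin P Q = ⊤ := by
      rw [klFin, if_neg (by push_neg; exact ⟨a, hqa, hpa⟩)]
    rw [hL, hR, top_add]
  · by_cases hC2 : ∃ a, Q a = 1 ∧ P a ≠ 1
    · obtain ⟨a, hqa, hpa⟩ := hC2
      have hL : (∑ a, klBin (P a) (Q a)) = ⊤ := by
        apply ENNReal.sum_eq_top.mpr
        refine ⟨a, Finset.mem_univ a, ?_⟩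
        rw [klBin, if_pos]
        exact Or.inr ⟨hqa, hpa⟩
      have hR : klFin (fun a => (1 - P a) / c) (fun a => (1 - Q a) / c) = ⊤ := by
        rw [klFin, if_neg]
        push_neg
        refine ⟨a, by rw [hqa]; simp, ?_⟩
        intro h
        apply hpa
        have h0 : (1 - P a) = 0 := by
          field_simp at h
          linarith [h]
        linarith
      have hcoef0 : ((n : ℝ≥0∞) - 1) ≠ 0 := by
        rw [hcoef]; simp only [ne_eq, ENNReal.ofReal_eq_zero, not_le]; linarith
      rw [hL, hR, ENNReal.mul_top hcoef0, add_top _]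
    · -- finite case
      push_neg at hC1 hC2
      have habs : ∀ a, Q a = 0 → P a = 0 := hC1
      have habs' : ∀ a, Q a = 1 → P a = 1 := hC2
      have hratio : ∀ x y : ℝ, (x / c) / (y / c) = x / y := by
        intro x y
        rw [div_div_div_cancel_right₀]
        exact hcpos.ne'
      -- pointwise finiteness and identity
      have hfin : ∀ a, ¬((Q a = 0 ∧ P a ≠ 0) ∨ (Q a = 1 ∧ P a ≠ 1)) := by
        intro a h
        rcases h with ⟨h1, h2⟩ | ⟨h1, h2⟩
        exacts [h2 (habs a h1), h2 (habs' a h1)]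
      have hterm : ∀ a, klBin (P a) (Q a) =
          ENNReal.ofReal (P a * Real.log (P a / Q a) +
            (1 - P a) * Real.log ((1 - P a) / (1 - Q a))) := by
        intro a; rw [klBin, if_neg (hfin a)]
      have htermnn : ∀ a, 0 ≤ P a * Real.log (P a / Q a) +
          (1 - P a) * Real.log ((1 - P a) / (1 - Q a)) := fun a =>
        klBin_real_nonneg _ _ (hP a) (hP1 a) (hQ a) (hQ1 a) (habs a) (habs' a)
      -- sums
      set S1 : ℝ := ∑ a, P a * Real.log (P a / Q a) with hS1
      set S2 : ℝ := ∑ a, ((1 - P a) / c) * Real.log (((1 - P a) / c) / ((1 - Q a) / c))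
        with hS2
      have hsum1 : ∑ a : A, (1 - P a) = c := by
        rw [Finset.sum_sub_distrib, hPsum, Finset.sum_const, Finset.card_univ]
        simp [hc, hn]
      have hsum1Q : ∑ a : A, (1 - Q a) = c := by
        rw [Finset.sum_sub_distrib, hQsum, Finset.sum_const, Finset.card_univ]
        simp [hc, hn]
      have hPt_sum : ∑ a : A, (1 - P a) / c = 1 := by
        rw [← Finset.sum_div, hsum1, div_self hcpos.ne']
      have hQt_sum : ∑ a : A, (1 - Q a) / c = 1 := by
        rw [← Finset.sum_div, hsum1Q, div_self hcpos.ne']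
      have hS1nn : 0 ≤ S1 := gibbs_aux_s15 P Q hP hQ hPsum hQsum habs
      have hS2nn : 0 ≤ S2 := by
        apply gibbs_aux_s15 (fun a => (1 - P a) / c) (fun a => (1 - Q a) / c)
          (fun a => div_nonneg (by linarith [hP1 a]) hcpos.le)
          (fun a => div_nonneg (by linarith [hQ1 a]) hcpos.le)
          hPt_sum hQt_sum
        intro a h
        have hq1 : Q a = 1 := by
          have : (1 - Q a) = 0 := by
            field_simp at h; linarith
          linarith
        have := habs' a hq1
        rw [this]; simp
      -- the key real identity, termwise
      have hkey : ∑ a, (P a * Real.log (P a / Q a) +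
          (1 - P a) * Real.log ((1 - P a) / (1 - Q a))) = S1 + c * S2 := by
        rw [Finset.sum_add_distrib, hS1, hS2, Finset.mul_sum]
        congr 1
        apply Finset.sum_congr rfl
        intro a _
        rw [hratio]
        field_simp
      calc (∑ a, klBin (P a) (Q a))
          = ∑ a, ENNReal.ofReal (P a * Real.log (P a / Q a) +
            (1 - P a) * Real.log ((1 - P a) / (1 - Q a))) := by
            exact Finset.sum_congr rfl fun a _ => hterm a
        _ = ENNReal.ofReal (∑ a, (P a * Real.log (P a / Q a) +
            (1 - P a) * Real.log ((1 - P a) / (1 - Q a)))) :=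
            (ENNReal.ofReal_sum_of_nonneg fun a _ => htermnn a).symm
        _ = ENNReal.ofReal (S1 + c * S2) := by rw [hkey]
        _ = ENNReal.ofReal S1 + ENNReal.ofReal c * ENNReal.ofReal S2 := by
            rw [ENNReal.ofReal_add hS1nn (by positivity), ENNReal.ofReal_mul hcpos.le]
        _ = klFin P Q + ((n : ℝ≥0∞) - 1) *
            klFin (fun a => (1 - P a) / c) (fun a => (1 - Q a) / c) := by
            rw [hcoef, klFin, if_pos habs, klFin, if_pos]
            intro a h
            have hq1 : Q a = 1 := by
              have : (1 - Q a) = 0 := by field_simp at h; linarith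
              linarith
            rw [habs' a hq1]; simp
end

section
/- Let A be a finite set, P_0 a probability distribution on A, and X_1, …, X_n i.i.d. random variables with law P_0. Let P̂_t(a) = (1/t) Σ_{s=1}^t 1{X_s = a} be the empirical distribution after t observations. Then for every δ > 0, P(∃ t ∈ {1,…,n} : t · KL(P̂_t; P_0) ≥ δ) ≤ 2e (δ log n + |A|) exp(−δ / |A|). -/
open scoped Classical

open MeasureTheory ProbabilityTheory Real Set
open scoped ENNReal

namespace SanovAux


/-- binary KL -/
noncomputable def klB (q p : ℝ) : ℝ :=
  q * Real.log (q / p) + (1 - q) * Real.log ((1 - q) / (1 - p))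

noncomputable def phiB (p l : ℝ) : ℝ := Real.log (1 - p + p * Real.exp l)

noncomputable def lamB (p q : ℝ) : ℝ := Real.log (q * (1 - p) / (p * (1 - q)))

lemma phiB_base_pos {p : ℝ} (hp1 : p < 1) (hp : 0 ≤ p) (l : ℝ) :
    0 < 1 - p + p * Real.exp l := by
  have := Real.exp_pos l
  nlinarith

/-- log x ≥ 1 - 1/x for x > 0 -/
lemma one_sub_inv_le_log {x : ℝ} (hx : 0 < x) : 1 - 1/x ≤ Real.log x := by
  have h := Real.log_le_sub_one_of_pos (x := 1/x) (by positivity)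
  rw [Real.log_div one_ne_zero (ne_of_gt hx), Real.log_one] at h
  have : (1:ℝ)/x - 1 = 1/x - 1 := rfl
  linarith

/-- Gibbs inequality for unnormalized nonneg vectors with equal mass. -/
lemma gibbs {ι : Type*} (s : Finset ι) (a b : ι → ℝ)
    (ha : ∀ i ∈ s, 0 ≤ a i) (hb : ∀ i ∈ s, 0 ≤ b i)
    (hab : ∀ i ∈ s, b i = 0 → a i = 0)
    (hsum : ∑ i ∈ s, a i = ∑ i ∈ s, b i) :
    0 ≤ ∑ i ∈ s, a i * Real.log (a i / b i) := by
  have key : ∀ i ∈ s, a i - b i ≤ a i * Real.log (a i / b i) := by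
    intro i hi
    rcases eq_or_lt_of_le (ha i hi) with h0 | hpos
    · simp [← h0]; linarith [hb i hi]
    rcases eq_or_lt_of_le (hb i hi) with hb0 | hbpos
    · exact absurd (hab i hi hb0.symm) (by linarith)
    have h := one_sub_inv_le_log (x := a i / b i) (by positivity)
    have h2 : 1/(a i / b i) = b i / a i := by field_simp
    rw [h2] at h
    have := mul_le_mul_of_nonneg_left h (le_of_lt hpos)
    calc a i - b i = a i * (1 - b i / a i) := by field_simp
    _ ≤ a i * Real.log (a i / b i) := this
  calc (0:ℝ) = ∑ i ∈ s, a i - ∑ i ∈ s, b i := by rw [hsum]; ring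
  _ = ∑ i ∈ s, (a i - b i) := by rw [Finset.sum_sub_distrib]
  _ ≤ _ := Finset.sum_le_sum key

/-- key identity: `lamB p q * μ - phiB p (lamB p q) = klB q p + lamB p q * (μ - q)` -/
lemma lam_identity {p q : ℝ} (hp : 0 < p) (hp1 : p < 1) (hq : 0 < q) (hq1 : q < 1) (μ : ℝ) :
    lamB p q * μ - phiB p (lamB p q) = klB q p + lamB p q * (μ - q) := by
  have h1q : (0:ℝ) < 1 - q := by linarith
  have h1p : (0:ℝ) < 1 - p := by linarith
  have hexp : Real.exp (lamB p q) = q * (1 - p) / (p * (1 - q)) := by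
    rw [lamB, Real.exp_log (by positivity)]
  have hphi : phiB p (lamB p q) = Real.log ((1 - p) / (1 - q)) := by
    rw [phiB, hexp]
    congr 1
    field_simp
    ring
  have hlam : lamB p q = Real.log (q / p) - Real.log ((1 - q) / (1 - p)) := by
    rw [lamB, ← Real.log_div (by positivity) (by positivity)]
    congr 1
    field_simp
  have hphilog : Real.log ((1-p)/(1-q)) = - Real.log ((1-q)/(1-p)) := by
    rw [← Real.log_inv]
    congr 1
    field_simp
  rw [hphi, hphilog, klB, hlam]
  ring

lemma lamB_nonneg {p q : ℝ} (hp : 0 < p) (hq1 : q < 1) (hpq : p ≤ q) : 0 ≤ lamB p q := by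
  have h1q : (0:ℝ) < 1 - q := by linarith
  apply Real.log_nonneg
  rw [le_div_iff₀ (by positivity)]
  nlinarith

lemma klB_symm (q p : ℝ) : klB (1 - q) (1 - p) = klB q p := by
  simp only [klB]
  ring_nf

lemma klB_continuousOn {p : ℝ} (hp : 0 < p) :
    ContinuousOn (fun q => klB q p) (Icc p 1) := by
  have heq : EqOn (fun q => klB q p)
      (fun q => (q * Real.log q - q * Real.log p) +
        ((1-q) * Real.log (1-q) - (1-q) * Real.log (1-p))) (Icc p 1) := by
    intro q hq
    simp only [klB]
    rcases eq_or_lt_of_le hq.2 with h1 | h1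
    · subst h1; simp [Real.log_div, hp.ne']
    · have hq0 : 0 < q := lt_of_lt_of_le hp hq.1
      rw [Real.log_div hq0.ne' hp.ne', Real.log_div (by linarith) ?_]
      · ring
      · intro h
        linarith [hq.1]
  apply ContinuousOn.congr _ heq
  apply ContinuousOn.add
  · apply ContinuousOn.sub
    · exact Real.continuous_mul_log.continuousOn
    · exact (continuous_id.mul continuous_const).continuousOn
  · apply ContinuousOn.sub
    · exact (Real.continuous_mul_log.comp (continuous_const.sub continuous_id)).continuousOn
    · exact ((continuous_const.sub continuous_id).mul continuous_const).continuousOn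

lemma klB_self {p : ℝ} (hp : 0 < p) (hp1 : p < 1) : klB p p = 0 := by
  simp [klB, div_self hp.ne', div_self (by linarith : (1:ℝ) - p ≠ 0)]

lemma klB_one {p : ℝ} : klB 1 p = - Real.log p := by
  simp [klB, Real.log_div one_ne_zero]

lemma klB_at_one_arg {q : ℝ} (hq : 0 ≤ q) (hq1 : q ≤ 1) : klB q 1 ≤ 0 := by
  have : klB q 1 = q * Real.log q := by simp [klB]
  rw [this]
  exact mul_nonpos_of_nonneg_of_nonpos hq (Real.log_nonpos hq hq1)



variable {Ω : Type*} {mΩ : MeasurableSpace Ω} {P : Measure Ω} [IsProbabilityMeasure P]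

lemma integrable_of_bdd {f : Ω → ℝ} (hf : Measurable f) {C : ℝ} (h : ∀ ω, |f ω| ≤ C) :
    Integrable f P :=
  (integrable_const C).mono' hf.aestronglyMeasurable (ae_of_all _ h)

lemma integral_finset_prod_of_indep {V : ℕ → Ω → ℝ} (hmeas : ∀ s, Measurable (V s))
    (hindep : iIndepFun V P) (hpos : ∀ s ω, 0 ≤ V s ω)
    (F : Finset ℕ) :
    ∫ ω, ∏ s ∈ F, V s ω ∂P = ∏ s ∈ F, ∫ ω, V s ω ∂P := by
  classical
  induction F using Finset.induction_on with
  | empty => simp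
  | @insert j F hj ih =>
    rw [Finset.prod_insert hj, ← ih]
    have hind : IndepFun (∏ s ∈ F, V s) (V j) P :=
      hindep.indepFun_finset_prod_of_notMem hmeas hj
    have hprod : Measurable (∏ s ∈ F, V s : Ω → ℝ) := by
      have : Measurable fun ω => ∏ s ∈ F, V s ω := Finset.measurable_prod _ fun s _ => hmeas s
      simpa [Finset.prod_fn] using this
    have := hind.integral_mul_eq_mul_integral
      hprod.aestronglyMeasurable (hmeas j).aestronglyMeasurable
    have heq : ∀ ω, (∏ s ∈ F, V s) ω * V j ω = V j ω * ∏ s ∈ F, V s ω := by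
      intro ω; rw [Finset.prod_apply]; ring
    calc ∫ ω, ∏ s ∈ insert j F, V s ω ∂P
        = ∫ ω, V j ω * ∏ s ∈ F, V s ω ∂P := by
          congr 1; funext ω; rw [Finset.prod_insert hj]
    _ = ∫ ω, ((∏ s ∈ F, V s) * V j) ω ∂P := by
          congr 1; funext ω; rw [Pi.mul_apply, heq]
    _ = (∫ ω, (∏ s ∈ F, V s) ω ∂P) * ∫ ω, V j ω ∂P := this
    _ = (∫ ω, ∏ s ∈ F, V s ω ∂P) * ∫ ω, V j ω ∂P := by
          congr 1; apply integral_congr_ae; filter_upwards with ω; rw [Finset.prod_apply]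
    _ = (∫ ω, V j ω ∂P) * ∫ ω, ∏ s ∈ F, V s ω ∂P := by ring

/-- partial sums -/
noncomputable def Ssum (W : ℕ → Ω → ℝ) (t : ℕ) (ω : Ω) : ℝ := ∑ s ∈ Finset.range t, W s ω

lemma Ssum_nonneg {W : ℕ → Ω → ℝ} (hW01 : ∀ s ω, W s ω = 0 ∨ W s ω = 1) (t : ℕ) (ω : Ω) :
    0 ≤ Ssum W t ω :=
  Finset.sum_nonneg fun s _ => by rcases hW01 s ω with h | h <;> simp [h]

lemma Ssum_le {W : ℕ → Ω → ℝ} (hW01 : ∀ s ω, W s ω = 0 ∨ W s ω = 1) (t : ℕ) (ω : Ω) :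
    Ssum W t ω ≤ t := by
  have : Ssum W t ω ≤ ∑ s ∈ Finset.range t, (1:ℝ) :=
    Finset.sum_le_sum fun s _ => by rcases hW01 s ω with h | h <;> simp [h]
  simpa using this

lemma Ssum_measurable {W : ℕ → Ω → ℝ} (hWmeas : ∀ s, Measurable (W s)) (t : ℕ) :
    Measurable (Ssum W t) :=
  Finset.measurable_sum _ fun s _ => hWmeas s

omit [IsProbabilityMeasure P] in
/-- integral of a 0/1 variable -/
lemma integral_of_01 {W : Ω → ℝ} (hmeas : Measurable W) (hW01 : ∀ ω, W ω = 0 ∨ W ω = 1)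
    {p : ℝ} (hp : 0 ≤ p) (hW1 : P {ω | W ω = 1} = ENNReal.ofReal p) :
    ∫ ω, W ω ∂P = p := by
  have hset : MeasurableSet {ω | W ω = 1} := hmeas (measurableSet_singleton 1)
  have heq : W = Set.indicator {ω | W ω = 1} (fun _ => (1:ℝ)) := by
    funext ω
    rcases hW01 ω with h | h
    · rw [h, Set.indicator_apply, if_neg]; simp [h]
    · rw [h, Set.indicator_apply, if_pos]; exact h
  rw [heq, integral_indicator_const _ hset, measureReal_def, hW1, ENNReal.toReal_ofReal hp]
  simp


/-- Doob-type maximal inequality for the exponential process of i.i.d 0/1 variables. -/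
lemma doob_exp {W : ℕ → Ω → ℝ} {p : ℝ}
    (hWmeas : ∀ s, Measurable (W s))
    (hindep : iIndepFun W P)
    (hW01 : ∀ s ω, W s ω = 0 ∨ W s ω = 1) (hp0 : 0 < p) (hp1 : p < 1)
    (hW1 : ∀ s, P {ω | W s ω = 1} = ENNReal.ofReal p)
    (l c : ℝ) (hc : 0 < c) (M : ℕ) :
    P {ω | ∃ t, 1 ≤ t ∧ t ≤ M ∧ c ≤ l * Ssum W t ω - t * phiB p l} ≤
      ENNReal.ofReal (Real.exp (-c)) := by
  classical
  set φ := phiB p l with hφ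
  set Z : ℕ → Ω → ℝ := fun t ω => l * Ssum W t ω - t * φ with hZ
  have hZmeas : ∀ t, Measurable (Z t) :=
    fun t => ((Ssum_measurable hWmeas t).const_mul l).sub measurable_const
  -- the one-step factors
  set V : ℕ → Ω → ℝ := fun s ω => Real.exp (l * W s ω - φ) with hV
  have hVmeas : ∀ s, Measurable (V s) :=
    fun s => (((hWmeas s).const_mul l).sub measurable_const).exp
  have hVpos : ∀ s ω, 0 ≤ V s ω := fun s ω => (Real.exp_pos _).le
  have hVindep : iIndepFun V P :=
    hindep.comp (fun s => fun x : ℝ => Real.exp (l * x - φ))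
      (fun s => ((measurable_id.const_mul l).sub measurable_const).exp)
  have hVint : ∀ s, ∫ ω, V s ω ∂P = 1 := by
    intro s
    have hpt : ∀ ω, V s ω = Real.exp (-φ) * (1 + (Real.exp l - 1) * W s ω) := by
      intro ω
      rcases hW01 s ω with h | h
      · simp [hV, h]
      · rw [hV]
        simp only [h, mul_one]
        rw [show l - φ = -φ + l by ring, Real.exp_add]
        ring
    have hWint : Integrable (W s) P :=
      integrable_of_bdd (hWmeas s) (C := 1)
        (fun ω => by rcases hW01 s ω with h | h <;> simp [h])
    calc ∫ ω, V s ω ∂P = ∫ ω, Real.exp (-φ) * (1 + (Real.exp l - 1) * W s ω) ∂P := by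
          exact integral_congr_ae (ae_of_all _ hpt)
    _ = Real.exp (-φ) * ∫ ω, (1 + (Real.exp l - 1) * W s ω) ∂P := integral_const_mul _ _
    _ = Real.exp (-φ) * (1 + (Real.exp l - 1) * p) := by
          rw [integral_add (integrable_const 1) (hWint.const_mul _), integral_const_mul,
            integral_of_01 (hWmeas s) (hW01 s) hp0.le (hW1 s)]
          simp
    _ = 1 := by
          have hb : (0:ℝ) < 1 - p + p * Real.exp l := phiB_base_pos hp1 hp0.le l
          have : Real.exp φ = 1 - p + p * Real.exp l := Real.exp_log hb
          rw [Real.exp_neg]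
          rw [this]
          field_simp
          ring
  -- first-hitting decomposition
  set A : ℕ → Set Ω := fun t => {ω | c ≤ Z t ω ∧ ∀ s, s < t → ¬ c ≤ Z s ω} with hA
  have hAmeas : ∀ t, MeasurableSet (A t) := by
    intro t
    have h1 : MeasurableSet {ω | c ≤ Z t ω} := measurableSet_le measurable_const (hZmeas t)
    have h2 : MeasurableSet {ω | ∀ s, s < t → ¬ c ≤ Z s ω} := by
      have : {ω | ∀ s, s < t → ¬ c ≤ Z s ω} = ⋂ s, ⋂ (_ : s < t), {ω | ¬ c ≤ Z s ω} := by
        ext ω; simp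
      rw [this]
      exact MeasurableSet.iInter fun s => MeasurableSet.iInter fun _ =>
        (measurableSet_le measurable_const (hZmeas s)).compl
    have : A t = {ω | c ≤ Z t ω} ∩ {ω | ∀ s, s < t → ¬ c ≤ Z s ω} := rfl
    rw [this]
    exact h1.inter h2
  have hAdisj : (↑(Finset.Icc 1 M) : Set ℕ).Pairwise (Function.onFun Disjoint A) := by
    intro t _ t' _ hne
    rw [Function.onFun, Set.disjoint_left]
    rintro ω ⟨h1, h2⟩ ⟨h1', h2'⟩
    rcases lt_or_gt_of_ne hne with h | h
    · exact h2' t h h1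
    · exact h2 t' h h1'
  have hcover : {ω | ∃ t, 1 ≤ t ∧ t ≤ M ∧ c ≤ Z t ω} ⊆ ⋃ t ∈ Finset.Icc 1 M, A t := by
    rintro ω ⟨t, ht1, htM, hct⟩
    have hex : ∃ u, c ≤ Z u ω := ⟨t, hct⟩
    set u := Nat.find hex with hu
    have hu_spec : c ≤ Z u ω := Nat.find_spec hex
    have hu_min : ∀ s, s < u → ¬ c ≤ Z s ω := fun s hs => Nat.find_min hex hs
    have hu_le : u ≤ t := Nat.find_min' hex hct
    have hu_pos : 1 ≤ u := by
      rcases Nat.eq_zero_or_pos u with h0 | h0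
      · exfalso
        rw [h0] at hu_spec
        have : Z 0 ω = 0 := by simp [hZ, Ssum]
        rw [this] at hu_spec
        linarith
      · exact h0
    exact Set.mem_biUnion (Finset.mem_Icc.mpr ⟨hu_pos, hu_le.trans htM⟩) ⟨hu_spec, hu_min⟩
  -- bounds on Z and integrability
  have hZbdd : ∀ t, t ≤ M → ∀ ω, |Real.exp (Z t ω)| ≤ Real.exp (|l| * M + M * |φ|) := by
    intro t htM ω
    rw [abs_of_pos (Real.exp_pos _), Real.exp_le_exp]
    show l * Ssum W t ω - (t:ℝ) * φ ≤ |l| * M + M * |φ|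
    have h1 : l * Ssum W t ω ≤ |l| * M := by
      have h2 : |l * Ssum W t ω| ≤ |l| * M := by
        rw [abs_mul]
        apply mul_le_mul_of_nonneg_left _ (abs_nonneg l)
        rw [abs_of_nonneg (Ssum_nonneg hW01 t ω)]
        exact le_trans (Ssum_le hW01 t ω) (by exact_mod_cast Nat.cast_le.mpr htM)
      linarith [le_abs_self (l * Ssum W t ω)]
    have h3 : -(t * φ) ≤ M * |φ| := by
      have : |(t:ℝ) * φ| ≤ M * |φ| := by
        rw [abs_mul, Nat.abs_cast]
        exact mul_le_mul_of_nonneg_right (by exact_mod_cast htM) (abs_nonneg φ)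
      linarith [neg_abs_le ((t:ℝ) * φ)]
    linarith
  have hexpZint : ∀ t, t ≤ M → Integrable (fun ω => Real.exp (Z t ω)) P :=
    fun t htM => integrable_of_bdd (hZmeas t).exp (hZbdd t htM)
  -- key per-t step
  have key : ∀ t ∈ Finset.Icc 1 M,
      Real.exp c * (P (A t)).toReal ≤ ∫ ω in A t, Real.exp (Z M ω) ∂P := by
    intro t htmem
    rw [Finset.mem_Icc] at htmem
    obtain ⟨ht1, htM⟩ := htmem
    have step1 : Real.exp c * (P (A t)).toReal ≤ ∫ ω in A t, Real.exp (Z t ω) ∂P := by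
      have := setIntegral_ge_of_const_le (hAmeas t) (measure_ne_top P _)
        (fun ω hω => Real.exp_le_exp.mpr hω.1)
        ((hexpZint t htM).integrableOn)
      rw [smul_eq_mul, measureReal_def] at this
      linarith [this]
    -- independence step
    have step2 : ∫ ω in A t, Real.exp (Z t ω) ∂P = ∫ ω in A t, Real.exp (Z M ω) ∂P := by
      set R : Ω → ℝ := fun ω => ∏ s ∈ Finset.Ico t M, V s ω with hR
      have hRmeas : Measurable R := Finset.measurable_prod _ fun s _ => hVmeas s
      have hRpos : ∀ ω, 0 ≤ R ω := fun ω => Finset.prod_nonneg fun s _ => hVpos s ω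
      have hRint : ∫ ω, R ω ∂P = 1 := by
        rw [hR, integral_finset_prod_of_indep hVmeas hVindep hVpos]
        simp [hVint]
      set f : Ω → ℝ := (A t).indicator (fun ω => Real.exp (Z t ω)) with hf
      have hfmeas : Measurable f := ((hZmeas t).exp).indicator (hAmeas t)
      have hfnonneg : 0 ≤ f := fun ω => Set.indicator_nonneg (fun _ _ => (Real.exp_pos _).le) ω
      have hdisj : Disjoint (Finset.range t) (Finset.Ico t M) := by
        rw [Finset.disjoint_left]
        intro s hs hs'
        rw [Finset.mem_range] at hs
        rw [Finset.mem_Ico] at hs'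
        omega
      have base := hindep.indepFun_finset (Finset.range t) (Finset.Ico t M) hdisj hWmeas
      set zf : ℕ → ((i : (Finset.range t : Finset ℕ)) → ℝ) → ℝ :=
        fun u v => l * (∑ i ∈ (Finset.range t).attach, if (i : ℕ) < u then v i else 0) - u * φ
        with hzf
      have hzfmeas : ∀ u, Measurable (zf u) := by
        intro u
        apply Measurable.sub _ measurable_const
        apply Measurable.const_mul
        apply Finset.measurable_sum
        intro i _
        by_cases h : (i : ℕ) < u
        · simpa only [if_pos h] using measurable_pi_apply i
        · simpa only [if_neg h] using measurable_const
      set SB : Set ((i : (Finset.range t : Finset ℕ)) → ℝ) :=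
        {v | c ≤ zf t v ∧ ∀ s, s < t → ¬ c ≤ zf s v} with hSB
      have hSBmeas : MeasurableSet SB := by
        have h1 : MeasurableSet {v | c ≤ zf t v} := measurableSet_le measurable_const (hzfmeas t)
        have h2 : MeasurableSet {v | ∀ s, s < t → ¬ c ≤ zf s v} := by
          have heq2 : {v | ∀ s, s < t → ¬ c ≤ zf s v} =
              ⋂ s, ⋂ (_ : s < t), {v | ¬ c ≤ zf s v} := by ext v; simp
          rw [heq2]
          exact MeasurableSet.iInter fun s => MeasurableSet.iInter fun _ =>
            (measurableSet_le measurable_const (hzfmeas s)).compl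
        have heq3 : SB = {v | c ≤ zf t v} ∩ {v | ∀ s, s < t → ¬ c ≤ zf s v} := rfl
        rw [heq3]
        exact h1.inter h2
      set Φ : ((i : (Finset.range t : Finset ℕ)) → ℝ) → ℝ :=
        SB.indicator (fun v => Real.exp (zf t v)) with hΦ
      have hΦmeas : Measurable Φ := ((hzfmeas t).exp).indicator hSBmeas
      set Ψ : ((i : (Finset.Ico t M : Finset ℕ)) → ℝ) → ℝ :=
        fun w => ∏ i ∈ (Finset.Ico t M).attach, Real.exp (l * w i - φ) with hΨ
      have hΨmeas : Measurable Ψ :=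
        Finset.measurable_prod _ fun i _ =>
          Measurable.exp (by fun_prop)
      have hcomp := base.comp hΦmeas hΨmeas
      have hkey : ∀ u, u ≤ t → ∀ ω,
          zf u (fun i : (Finset.range t : Finset ℕ) => W i ω) = Z u ω := by
        intro u hu ω
        have h1 : (∑ i ∈ (Finset.range t).attach, if (i : ℕ) < u then W i ω else 0)
            = ∑ s ∈ Finset.range t, (if s < u then W s ω else 0) :=
          Finset.sum_attach (Finset.range t) (fun s => if s < u then W s ω else 0)
        have h2 : ∑ s ∈ Finset.range t, (if s < u then W s ω else 0) = Ssum W u ω := by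
          rw [← Finset.sum_filter]
          apply Finset.sum_congr _ (fun _ _ => rfl)
          ext s
          simp only [Finset.mem_filter, Finset.mem_range]
          omega
        show l * (∑ i ∈ (Finset.range t).attach, if (i : ℕ) < u then W i ω else 0) - u * φ
          = Z u ω
        rw [h1, h2]
      have hfeq : f = Φ ∘ (fun ω (i : (Finset.range t : Finset ℕ)) => W i ω) := by
        funext ω
        have hmem : ((fun i : (Finset.range t : Finset ℕ) => W i ω) ∈ SB) ↔ ω ∈ A t := by
          constructor
          · rintro ⟨ha, hb⟩
            exact ⟨by rwa [hkey t le_rfl ω] at ha,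
              fun s hs => by rw [← hkey s hs.le ω]; exact hb s hs⟩
          · rintro ⟨ha, hb⟩
            exact ⟨by rwa [hkey t le_rfl ω], fun s hs => by rw [hkey s hs.le ω]; exact hb s hs⟩
        by_cases hω : ω ∈ A t
        · show f ω = Φ _
          rw [hf]
          rw [Set.indicator_of_mem hω, hΦ, Set.indicator_of_mem (hmem.mpr hω), hkey t le_rfl ω]
        · show f ω = Φ _
          rw [hf]
          rw [Set.indicator_of_notMem hω, hΦ,
            Set.indicator_of_notMem (fun h => hω (hmem.mp h))]
      have hReq : R = Ψ ∘ (fun ω (i : (Finset.Ico t M : Finset ℕ)) => W i ω) := by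
        funext ω
        show R ω = ∏ i ∈ (Finset.Ico t M).attach, Real.exp (l * W i ω - φ)
        rw [hR]
        exact (Finset.prod_attach (Finset.Ico t M) (fun s => Real.exp (l * W s ω - φ))).symm
      have hIndep : IndepFun f R P := by
        rw [hfeq, hReq]
        exact hcomp
      have hmul := hIndep.integral_mul_eq_mul_integral
        hfmeas.aestronglyMeasurable hRmeas.aestronglyMeasurable
      have hptw : f * R = (A t).indicator (fun ω => Real.exp (Z M ω)) := by
        funext ω
        by_cases hω : ω ∈ A t
        · rw [Pi.mul_apply, hf, Set.indicator_of_mem hω, Set.indicator_of_mem hω]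
          have hprodR : R ω = Real.exp (∑ s ∈ Finset.Ico t M, (l * W s ω - φ)) := by
            rw [hR, Real.exp_sum]
          rw [hprodR, ← Real.exp_add]
          congr 1
          have hS : Ssum W t ω + ∑ s ∈ Finset.Ico t M, W s ω = Ssum W M ω :=
            Finset.sum_range_add_sum_Ico _ htM
          have hcard : (((Finset.Ico t M).card : ℕ) : ℝ) = (M : ℝ) - t := by
            rw [Nat.card_Ico, Nat.cast_sub htM]
          show Z t ω + ∑ s ∈ Finset.Ico t M, (l * W s ω - φ) = Z M ω
          rw [Finset.sum_sub_distrib, ← Finset.mul_sum, Finset.sum_const, nsmul_eq_mul, hcard]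
          show l * Ssum W t ω - (t:ℝ) * φ + (l * ∑ s ∈ Finset.Ico t M, W s ω - ((M:ℝ) - t) * φ)
            = l * Ssum W M ω - (M:ℝ) * φ
          rw [← hS]
          ring
        · rw [Pi.mul_apply, hf, Set.indicator_of_notMem hω, Set.indicator_of_notMem hω,
            zero_mul]
      calc ∫ ω in A t, Real.exp (Z t ω) ∂P = ∫ ω, f ω ∂P := by
            rw [hf, integral_indicator (hAmeas t)]
      _ = (∫ ω, f ω ∂P) * ∫ ω, R ω ∂P := by rw [hRint, mul_one]
      _ = ∫ ω, (f * R) ω ∂P := hmul.symm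
      _ = ∫ ω, (A t).indicator (fun ω => Real.exp (Z M ω)) ω ∂P := by rw [hptw]
      _ = ∫ ω in A t, Real.exp (Z M ω) ∂P := integral_indicator (hAmeas t)
    rw [← step2]
    exact step1
  -- total expectation is 1
  have hZM1 : ∫ ω, Real.exp (Z M ω) ∂P = 1 := by
    have hpt : ∀ ω, Real.exp (Z M ω) = ∏ s ∈ Finset.range M, V s ω := by
      intro ω
      have : ∀ s, V s ω = Real.exp (l * W s ω - φ) := fun s => rfl
      simp_rw [this, ← Real.exp_sum]
      congr 1
      rw [Finset.sum_sub_distrib, ← Finset.mul_sum]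
      simp [hZ, Ssum, mul_comm]
    rw [integral_congr_ae (ae_of_all _ hpt),
      integral_finset_prod_of_indep hVmeas hVindep hVpos]
    simp [hVint]
  have hintOn : ∀ t ∈ Finset.Icc 1 M, IntegrableOn (fun ω => Real.exp (Z M ω)) (A t) P :=
    fun t _ => (hexpZint M le_rfl).integrableOn
  have hsum : Real.exp c * ∑ t ∈ Finset.Icc 1 M, (P (A t)).toReal ≤ 1 := by
    rw [Finset.mul_sum]
    calc ∑ t ∈ Finset.Icc 1 M, Real.exp c * (P (A t)).toReal
        ≤ ∑ t ∈ Finset.Icc 1 M, ∫ ω in A t, Real.exp (Z M ω) ∂P := Finset.sum_le_sum key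
    _ = ∫ ω in ⋃ t ∈ Finset.Icc 1 M, A t, Real.exp (Z M ω) ∂P :=
        (integral_biUnion_finset _ (fun t _ => hAmeas t) hAdisj hintOn).symm
    _ ≤ ∫ ω, Real.exp (Z M ω) ∂P :=
        setIntegral_le_integral (hexpZint M le_rfl) (ae_of_all _ fun ω => (Real.exp_pos _).le)
    _ = 1 := hZM1
  have hPev : P {ω | ∃ t, 1 ≤ t ∧ t ≤ M ∧ c ≤ l * Ssum W t ω - ↑t * φ} ≤
      ∑ t ∈ Finset.Icc 1 M, P (A t) :=
    (measure_mono hcover).trans (measure_biUnion_finset_le _ _)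
  refine hPev.trans ?_
  have hne : ∀ t ∈ Finset.Icc 1 M, P (A t) ≠ ∞ := fun t _ => measure_ne_top P _
  have hsumne : (∑ t ∈ Finset.Icc 1 M, P (A t)) ≠ ∞ := by
    rw [← lt_top_iff_ne_top]
    exact ENNReal.sum_lt_top.mpr fun t _ => measure_lt_top P _
  rw [ENNReal.le_ofReal_iff_toReal_le hsumne (Real.exp_pos _).le, ENNReal.toReal_sum hne]
  have h0 : (0:ℝ) < Real.exp c := Real.exp_pos c
  have hmul : Real.exp c * (∑ t ∈ Finset.Icc 1 M, (P (A t)).toReal) ≤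
      Real.exp c * Real.exp (-c) := by
    rw [← Real.exp_add]
    simpa using hsum
  exact le_of_mul_le_mul_left hmul h0


/-- probability that the first `t0` values are all one -/
lemma all_ones_prob {W : ℕ → Ω → ℝ} {p : ℝ}
    (hWmeas : ∀ s, Measurable (W s))
    (hindep : iIndepFun W P)
    (hW01 : ∀ s ω, W s ω = 0 ∨ W s ω = 1) (hp : 0 ≤ p)
    (hW1 : ∀ s, P {ω | W s ω = 1} = ENNReal.ofReal p) (t0 : ℕ) :
    P {ω | Ssum W t0 ω = t0} ≤ ENNReal.ofReal (p ^ t0) := by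
  have hsub : {ω | Ssum W t0 ω = t0} ⊆ ⋂ s ∈ Finset.range t0, (W s) ⁻¹' {1} := by
    intro ω hω
    simp only [Set.mem_iInter, Set.mem_preimage, Set.mem_singleton_iff]
    intro s hs
    by_contra hne
    rcases hW01 s ω with h0 | h1
    · have hlt : Ssum W t0 ω < ∑ u ∈ Finset.range t0, (1:ℝ) := by
        apply Finset.sum_lt_sum
        · intro u _; rcases hW01 u ω with h | h <;> simp [h]
        · exact ⟨s, hs, by rw [h0]; norm_num⟩
      rw [hω] at hlt
      simp at hlt
    · exact hne h1
  refine (measure_mono hsub).trans ?_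
  have := (iIndepFun_iff_measure_inter_preimage_eq_mul.mp hindep) (Finset.range t0)
    (sets := fun _ => ({1} : Set ℝ)) (fun s _ => measurableSet_singleton 1)
  rw [this]
  apply le_of_eq
  have heq : ∀ s, W s ⁻¹' {1} = {ω | W s ω = 1} := fun s => rfl
  calc ∏ s ∈ Finset.range t0, P (W s ⁻¹' {1})
      = ∏ s ∈ Finset.range t0, ENNReal.ofReal p := by
        apply Finset.prod_congr rfl; intro s _; rw [heq s, hW1 s]
  _ = (ENNReal.ofReal p) ^ t0 := by rw [Finset.prod_const, Finset.card_range]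
  _ = ENNReal.ofReal (p ^ t0) := (ENNReal.ofReal_pow hp t0).symm

/-- slice bound, upper tail -/
lemma slice_upper {W : ℕ → Ω → ℝ} {p : ℝ}
    (hWmeas : ∀ s, Measurable (W s))
    (hindep : iIndepFun W P)
    (hW01 : ∀ s ω, W s ω = 0 ∨ W s ω = 1) (hp0 : 0 < p) (hp1 : p < 1)
    (hW1 : ∀ s, P {ω | W s ω = 1} = ENNReal.ofReal p)
    {x lo : ℝ} (hx : 1 < x) (hlo : 0 < lo) {M : ℕ} (hM1 : 1 ≤ M)
    (hMlo : (M : ℝ) * (x - 1) ≤ lo * x) :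
    P {ω | ∃ t : ℕ, 1 ≤ t ∧ t ≤ M ∧ lo ≤ t ∧ p ≤ Ssum W t ω / t ∧
        x ≤ t * klB (Ssum W t ω / t) p} ≤ ENNReal.ofReal (Real.exp (1 - x)) := by
  have hM0 : (0:ℝ) < M := by exact_mod_cast hM1
  have hx0 : (0:ℝ) < x := by linarith
  by_cases hT : ∃ q0 ∈ Icc p 1, x / M ≤ klB q0 p
  · obtain ⟨q0, hq0mem, hq0kl⟩ := hT
    -- least solution q of klB q p = x / M
    have hklp : klB p p = 0 := klB_self hp0 hp1
    have hcont : ContinuousOn (fun q => klB q p) (Icc p q0) :=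
      (klB_continuousOn hp0).mono (Icc_subset_Icc le_rfl hq0mem.2)
    have hIVT := intermediate_value_Icc hq0mem.1 hcont
    have hxM_mem : x / M ∈ Icc (klB p p) (klB q0 p) := by
      rw [hklp]
      exact ⟨by positivity, hq0kl⟩
    obtain ⟨q1, hq1mem, hq1kl⟩ := hIVT hxM_mem
    set T : Set ℝ := {q ∈ Icc p 1 | klB q p = x / M} with hTdef
    have hTne : T.Nonempty := ⟨q1, ⟨hq1mem.1, hq1mem.2.trans hq0mem.2⟩, hq1kl⟩
    have hTclosed : IsClosed T := by
      have : T = Icc p 1 ∩ (fun q => klB q p) ⁻¹' {x / M} := by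
        ext q; simp [hTdef, Set.mem_sep_iff, and_comm]
      rw [this]
      exact (klB_continuousOn hp0).preimage_isClosed_of_isClosed isClosed_Icc
        (isClosed_singleton)
    have hTcompact : IsCompact T :=
      isCompact_Icc.of_isClosed_subset hTclosed (fun q hq => hq.1)
    obtain ⟨q, hqT, hqLeast⟩ := hTcompact.exists_isLeast hTne
    obtain ⟨hqmem, hqkl⟩ := hqT
    -- any empirical mean in the event is ≥ q
    have hmu_ge : ∀ (μ : ℝ), μ ∈ Icc p 1 → x / M ≤ klB μ p → q ≤ μ := by
      intro μ hμmem hμkl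
      rcases eq_or_lt_of_le hμkl with heq | hlt
      · exact hqLeast ⟨hμmem, heq.symm⟩
      · by_contra hcon
        push_neg at hcon
        have hcont2 : ContinuousOn (fun q => klB q p) (Icc p μ) :=
          (klB_continuousOn hp0).mono (Icc_subset_Icc le_rfl hμmem.2)
        have hIVT2 := intermediate_value_Icc hμmem.1 hcont2
        have : x / M ∈ Icc (klB p p) (klB μ p) := by
          rw [hklp]; exact ⟨by positivity, hlt.le⟩
        obtain ⟨q'', hq''mem, hq''kl⟩ := hIVT2 this
        have : q ≤ q'' := hqLeast ⟨⟨hq''mem.1, hq''mem.2.trans hμmem.2⟩, hq''kl⟩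
        linarith [hq''mem.2]
    rcases eq_or_lt_of_le hqmem.2 with hq1' | hq1'
    · -- corner case q = 1 : all observations are 1
      subst hq1'
      have hlogp : Real.log p = -(x / M) := by
        have hko : klB 1 p = - Real.log p := klB_one
        rw [hko] at hqkl
        linarith
      set t0 := max 1 ⌈lo⌉₊ with ht0def
      have ht0ge : ⌈lo⌉₊ ≤ t0 := le_max_right _ _
      have ht0lo : lo ≤ (t0 : ℝ) :=
        le_trans (Nat.le_ceil lo) (by exact_mod_cast ht0ge)
      have hsub : {ω | ∃ t : ℕ, 1 ≤ t ∧ t ≤ M ∧ lo ≤ t ∧ p ≤ Ssum W t ω / t ∧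
          x ≤ t * klB (Ssum W t ω / t) p} ⊆ {ω | Ssum W t0 ω = t0} := by
        rintro ω ⟨t, ht1, htM, htlo, hmu, hkl⟩
        have ht0' : (0:ℝ) < t := by exact_mod_cast ht1
        set μ := Ssum W t ω / t with hμdef
        have hμ1 : μ ≤ 1 := by
          rw [hμdef, div_le_one ht0']
          exact Ssum_le hW01 t ω
        have hxt : x / M ≤ klB μ p := by
          have h1 : x / t ≤ klB μ p := by
            rw [div_le_iff₀ ht0']
            linarith [mul_comm (t:ℝ) (klB μ p)]
          have h2 : x / M ≤ x / t :=
            div_le_div_of_nonneg_left hx0.le ht0' (by exact_mod_cast htM)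
          linarith
        have h1le : (1:ℝ) ≤ μ := hmu_ge μ ⟨hmu, hμ1⟩ hxt
        have hSt : Ssum W t ω = t := by
          have h1' : (t:ℝ) ≤ Ssum W t ω := by
            rw [hμdef, le_div_iff₀ ht0'] at h1le
            linarith
          linarith [Ssum_le hW01 t ω]
        have hall : ∀ s, s < t → W s ω = 1 := by
          intro s hs
          by_contra hne
          rcases hW01 s ω with h0 | h1
          · have hlt : Ssum W t ω < ∑ u ∈ Finset.range t, (1:ℝ) := by
              apply Finset.sum_lt_sum
              · intro u _; rcases hW01 u ω with h | h <;> simp [h]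
              · exact ⟨s, Finset.mem_range.mpr hs, by rw [h0]; norm_num⟩
            rw [hSt] at hlt
            simp at hlt
          · exact hne h1
        have ht0t : t0 ≤ t := by
          apply max_le ht1
          exact Nat.ceil_le.mpr htlo
        show Ssum W t0 ω = t0
        calc Ssum W t0 ω = ∑ s ∈ Finset.range t0, (1:ℝ) := by
              apply Finset.sum_congr rfl
              intro s hs
              exact hall s (lt_of_lt_of_le (Finset.mem_range.mp hs) ht0t)
        _ = t0 := by simp
      refine (measure_mono hsub).trans
        ((all_ones_prob hWmeas hindep hW01 hp0.le hW1 t0).trans ?_)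
      apply ENNReal.ofReal_le_ofReal
      have hpow : p ^ t0 = Real.exp (t0 * Real.log p) := by
        rw [← Real.log_pow, Real.exp_log (pow_pos hp0 t0)]
      rw [hpow, hlogp, Real.exp_le_exp]
      have h2 : x - 1 ≤ t0 * (x / M) := by
        have hle1 : (M:ℝ) * (x-1) ≤ (t0:ℝ) * x :=
          hMlo.trans (mul_le_mul_of_nonneg_right ht0lo hx0.le)
        rw [mul_div_assoc'] at *
        rw [le_div_iff₀ hM0]
        linarith
      nlinarith [h2]
    · -- main case q < 1
      have hq0 : 0 < q := lt_of_lt_of_le hp0 hqmem.1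
      set l := lamB p q with hldef
      have hl0 : 0 ≤ l := lamB_nonneg hp0 hq1' hqmem.1
      have hsub : {ω | ∃ t : ℕ, 1 ≤ t ∧ t ≤ M ∧ lo ≤ t ∧ p ≤ Ssum W t ω / t ∧
          x ≤ t * klB (Ssum W t ω / t) p} ⊆
          {ω | ∃ t, 1 ≤ t ∧ t ≤ M ∧ (x - 1) ≤ l * Ssum W t ω - t * phiB p l} := by
        rintro ω ⟨t, ht1, htM, htlo, hmu, hkl⟩
        refine ⟨t, ht1, htM, ?_⟩
        have ht0' : (0:ℝ) < t := by exact_mod_cast ht1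
        set μ := Ssum W t ω / t with hμdef
        have hμ1 : μ ≤ 1 := by
          rw [hμdef, div_le_one ht0']
          exact Ssum_le hW01 t ω
        have hxt : x / M ≤ klB μ p := by
          have h1 : x / t ≤ klB μ p := by
            rw [div_le_iff₀ ht0']
            linarith [mul_comm (t:ℝ) (klB μ p)]
          have h2 : x / M ≤ x / t :=
            div_le_div_of_nonneg_left hx0.le ht0' (by exact_mod_cast htM)
          linarith
        have hqμ : q ≤ μ := hmu_ge μ ⟨hmu, hμ1⟩ hxt
        have hid := lam_identity hp0 hp1 hq0 hq1' μ
        have hSμ : Ssum W t ω = t * μ := by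
          rw [hμdef]
          field_simp
        have hstep : x - 1 ≤ (t:ℝ) * (x / M) := by
          have hle1 : (M:ℝ) * (x-1) ≤ (t:ℝ) * x :=
            hMlo.trans (mul_le_mul_of_nonneg_right htlo hx0.le)
          rw [mul_div_assoc', le_div_iff₀ hM0]
          linarith
        have hlmu : 0 ≤ l * (μ - q) := mul_nonneg hl0 (by linarith)
        calc (x:ℝ) - 1 ≤ (t:ℝ) * (x / M) := hstep
        _ = (t:ℝ) * klB q p := by rw [hqkl]
        _ ≤ (t:ℝ) * (klB q p + l * (μ - q)) := by nlinarith
        _ = (t:ℝ) * (l * μ - phiB p l) := by rw [← hid]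
        _ = l * Ssum W t ω - t * phiB p l := by rw [hSμ]; ring
      refine (measure_mono hsub).trans ?_
      have hdoob := doob_exp hWmeas hindep hW01 hp0 hp1 hW1 l (x - 1) (by linarith) M
      refine hdoob.trans (le_of_eq ?_)
      congr 1
      ring_nf
  · -- no solution: event is empty
    push_neg at hT
    have hempty : {ω | ∃ t : ℕ, 1 ≤ t ∧ t ≤ M ∧ lo ≤ t ∧ p ≤ Ssum W t ω / t ∧
        x ≤ t * klB (Ssum W t ω / t) p} = ∅ := by
      ext ω
      simp only [Set.mem_setOf_eq, Set.mem_empty_iff_false, iff_false]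
      rintro ⟨t, ht1, htM, _, hmu, hkl⟩
      have ht0 : (0:ℝ) < t := by exact_mod_cast ht1
      set μ := Ssum W t ω / t with hμdef
      have hμ1 : μ ≤ 1 := by
        rw [hμdef, div_le_one ht0]
        exact Ssum_le hW01 t ω
      have h1 : x / t ≤ klB μ p := by
        rw [div_le_iff₀ ht0]
        linarith [hkl, mul_comm (t:ℝ) (klB μ p)]
      have h2 : x / M ≤ x / t := by
        apply div_le_div_of_nonneg_left hx0.le ht0
        exact_mod_cast htM
      exact absurd (h2.trans h1) (not_le.mpr (hT μ ⟨hmu, hμ1⟩))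
    rw [hempty]
    simp


/-- full-horizon upper tail bound -/
lemma tail_upper {W : ℕ → Ω → ℝ} {p : ℝ}
    (hWmeas : ∀ s, Measurable (W s))
    (hindep : iIndepFun W P)
    (hW01 : ∀ s ω, W s ω = 0 ∨ W s ω = 1) (hp0 : 0 < p) (hp1 : p < 1)
    (hW1 : ∀ s, P {ω | W s ω = 1} = ENNReal.ofReal p)
    {x : ℝ} (hx : 1 < x) {n : ℕ} (hn : 1 ≤ n) :
    P {ω | ∃ t : ℕ, 1 ≤ t ∧ t ≤ n ∧ p ≤ Ssum W t ω / t ∧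
        x ≤ t * klB (Ssum W t ω / t) p} ≤
      ENNReal.ofReal ((x * Real.log n + 1) * Real.exp (1 - x)) := by
  have hx0 : (0:ℝ) < x := by linarith
  set r : ℝ := x / (x - 1) with hrdef
  have hr1 : 1 < r := by
    rw [hrdef, lt_div_iff₀ (by linarith)]
    linarith
  have hlogr : 1 / x ≤ Real.log r := by
    have h1 : Real.log (1 - 1/x) ≤ -(1/x) := by
      have := Real.log_le_sub_one_of_pos (x := 1 - 1/x)
        (by rw [sub_pos, div_lt_one hx0]; linarith)
      linarith
    have h2 : r = (1 - 1/x)⁻¹ := by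
      rw [hrdef]
      field_simp
    rw [h2, Real.log_inv]
    linarith
  have hlogr0 : 0 < Real.log r := lt_of_lt_of_le (by positivity) hlogr
  have hlogn0 : 0 ≤ Real.log n := Real.log_nonneg (by exact_mod_cast hn)
  set D : ℕ := ⌊Real.log n / Real.log r⌋₊ + 1 with hDdef
  -- slice events
  set E : ℕ → Set Ω := fun i => {ω | ∃ t : ℕ, 1 ≤ t ∧ t ≤ min n ⌊r ^ (i+1)⌋₊ ∧ r ^ i ≤ t ∧
      p ≤ Ssum W t ω / t ∧ x ≤ t * klB (Ssum W t ω / t) p} with hEdef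
  have hcover : {ω | ∃ t : ℕ, 1 ≤ t ∧ t ≤ n ∧ p ≤ Ssum W t ω / t ∧
      x ≤ t * klB (Ssum W t ω / t) p} ⊆ ⋃ i ∈ Finset.range D, E i := by
    rintro ω ⟨t, ht1, htn, hmu, hkl⟩
    have ht0 : (0:ℝ) < t := by exact_mod_cast ht1
    have ht1' : (1:ℝ) ≤ t := by exact_mod_cast ht1
    have hlt0 : 0 ≤ Real.log t := Real.log_nonneg ht1'
    set i : ℕ := ⌊Real.log t / Real.log r⌋₊ with hidef
    have hiD : i < D := by
      rw [hDdef, Nat.lt_add_one_iff]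
      apply Nat.floor_le_floor
      have hll : Real.log t ≤ Real.log n := Real.log_le_log ht0 (by exact_mod_cast htn)
      gcongr
    have hri : r ^ i ≤ t := by
      have h1 : (i:ℝ) * Real.log r ≤ Real.log t := by
        have := Nat.floor_le (a := Real.log t / Real.log r) (by positivity)
        rw [← hidef] at this
        calc (i:ℝ) * Real.log r ≤ (Real.log t / Real.log r) * Real.log r :=
              mul_le_mul_of_nonneg_right this hlogr0.le
        _ = Real.log t := by field_simp
      calc r ^ i = Real.exp ((i:ℝ) * Real.log r) := by
            rw [← Real.log_pow, Real.exp_log (pow_pos (by linarith) i)]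
      _ ≤ Real.exp (Real.log t) := Real.exp_le_exp.mpr h1
      _ = t := Real.exp_log ht0
    have hti : (t:ℝ) ≤ r ^ (i+1) := by
      have h1 : Real.log t < ((i:ℕ) + 1 : ℝ) * Real.log r := by
        have := Nat.lt_floor_add_one (Real.log t / Real.log r)
        rw [← hidef] at this
        calc Real.log t = (Real.log t / Real.log r) * Real.log r := by field_simp
        _ < ((i:ℝ) + 1) * Real.log r := by
              apply mul_lt_mul_of_pos_right this hlogr0
      calc (t:ℝ) = Real.exp (Real.log t) := (Real.exp_log ht0).symm
      _ ≤ Real.exp (((i:ℝ)+1) * Real.log r) := Real.exp_le_exp.mpr h1.le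
      _ = r ^ (i+1) := by
            rw [show ((i:ℝ)+1) * Real.log r = ((i+1:ℕ):ℝ) * Real.log r by push_cast; ring,
              ← Real.log_pow, Real.exp_log (pow_pos (by linarith) (i+1))]
    have htmin : t ≤ min n ⌊r ^ (i+1)⌋₊ := le_min htn (Nat.le_floor hti)
    exact Set.mem_biUnion (Finset.mem_range.mpr hiD) ⟨t, ht1, htmin, hri, hmu, hkl⟩
  refine (measure_mono hcover).trans ((measure_biUnion_finset_le _ _).trans ?_)
  have hslice : ∀ i ∈ Finset.range D, P (E i) ≤ ENNReal.ofReal (Real.exp (1 - x)) := by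
    intro i _
    have hr0 : (0:ℝ) < r := by linarith
    have hripos : (0:ℝ) < r ^ i := pow_pos hr0 i
    have hM1 : 1 ≤ min n ⌊r ^ (i+1)⌋₊ := by
      refine le_min hn (Nat.le_floor ?_)
      exact_mod_cast one_le_pow₀ hr1.le
    have hMlo : ((min n ⌊r ^ (i+1)⌋₊ : ℕ) : ℝ) * (x - 1) ≤ r ^ i * x := by
      have h1 : ((min n ⌊r ^ (i+1)⌋₊ : ℕ) : ℝ) ≤ r ^ (i+1) := by
        calc ((min n ⌊r ^ (i+1)⌋₊ : ℕ) : ℝ) ≤ (⌊r ^ (i+1)⌋₊ : ℝ) := by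
              exact_mod_cast min_le_right _ _
        _ ≤ r ^ (i+1) := Nat.floor_le (by positivity)
      have hrx : r * (x - 1) = x := by
        rw [hrdef]
        rw [div_mul_eq_mul_div, mul_div_assoc, div_self (by linarith : x - 1 ≠ 0), mul_one]
      have h2 : r ^ (i+1) * (x - 1) = r ^ i * x := by
        rw [pow_succ, mul_assoc, hrx]
      calc ((min n ⌊r ^ (i+1)⌋₊ : ℕ) : ℝ) * (x - 1) ≤ r ^ (i+1) * (x - 1) :=
            mul_le_mul_of_nonneg_right h1 (by linarith)
      _ = r ^ i * x := h2
    exact slice_upper hWmeas hindep hW01 hp0 hp1 hW1 hx hripos hM1 hMlo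
  calc ∑ i ∈ Finset.range D, P (E i)
      ≤ ∑ i ∈ Finset.range D, ENNReal.ofReal (Real.exp (1 - x)) :=
        Finset.sum_le_sum hslice
  _ = (D : ℝ≥0∞) * ENNReal.ofReal (Real.exp (1 - x)) := by
        rw [Finset.sum_const, Finset.card_range, nsmul_eq_mul]
  _ ≤ ENNReal.ofReal ((x * Real.log n + 1) * Real.exp (1 - x)) := by
        rw [← ENNReal.ofReal_natCast D, ← ENNReal.ofReal_mul (by positivity)]
        apply ENNReal.ofReal_le_ofReal
        apply mul_le_mul_of_nonneg_right _ (Real.exp_pos _).le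
        rw [hDdef]
        push_cast
        have h1 : (⌊Real.log n / Real.log r⌋₊ : ℝ) ≤ Real.log n / Real.log r :=
          Nat.floor_le (by positivity)
        have h2 : Real.log n / Real.log r ≤ x * Real.log n := by
          rw [div_le_iff₀ hlogr0]
          calc Real.log n = x * Real.log n * (1/x) := by field_simp
          _ ≤ x * Real.log n * Real.log r := by
                apply mul_le_mul_of_nonneg_left hlogr _
                positivity
        linarith

lemma tail_two_sided {W : ℕ → Ω → ℝ} {p : ℝ}
    (hWmeas : ∀ s, Measurable (W s))
    (hindep : iIndepFun W P)
    (hW01 : ∀ s ω, W s ω = 0 ∨ W s ω = 1) (hp0 : 0 < p) (hp1 : p < 1)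
    (hW1 : ∀ s, P {ω | W s ω = 1} = ENNReal.ofReal p)
    {x : ℝ} (hx : 1 < x) {n : ℕ} (hn : 1 ≤ n) :
    P {ω | ∃ t : ℕ, 1 ≤ t ∧ t ≤ n ∧ x ≤ t * klB (Ssum W t ω / t) p} ≤
      ENNReal.ofReal (2 * ((x * Real.log n + 1) * Real.exp (1 - x))) := by
  have hbnn : 0 ≤ (x * Real.log n + 1) * Real.exp (1 - x) := by
    have h0 : (0:ℝ) ≤ Real.log n := Real.log_nonneg (by exact_mod_cast hn)
    have : 0 ≤ x * Real.log n + 1 := by nlinarith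
    positivity
  set W' : ℕ → Ω → ℝ := fun s ω => 1 - W s ω with hW'def
  have hW'meas : ∀ s, Measurable (W' s) := fun s => measurable_const.sub (hWmeas s)
  have hW'indep : iIndepFun W' P :=
    hindep.comp (fun s => fun y : ℝ => 1 - y) (fun s => measurable_const.sub measurable_id)
  have hW'01 : ∀ s ω, W' s ω = 0 ∨ W' s ω = 1 := by
    intro s ω
    rcases hW01 s ω with h | h
    · right; simp [hW'def, h]
    · left; simp [hW'def, h]
  have hW'1 : ∀ s, P {ω | W' s ω = 1} = ENNReal.ofReal (1 - p) := by
    intro s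
    have hseteq : {ω | W' s ω = 1} = {ω | W s ω = 1}ᶜ := by
      ext ω
      simp only [hW'def, Set.mem_setOf_eq, Set.mem_compl_iff]
      constructor
      · intro h h1
        rw [h1] at h
        norm_num at h
      · intro h
        rcases hW01 s ω with h0 | h1
        · rw [h0]; ring
        · exact absurd h1 h
    have hms : MeasurableSet {ω | W s ω = 1} := (hWmeas s) (measurableSet_singleton 1)
    rw [hseteq, measure_compl hms (measure_ne_top P _), hW1 s, measure_univ,
      ← ENNReal.ofReal_one, ← ENNReal.ofReal_sub _ hp0.le]
  have hsplit : {ω | ∃ t : ℕ, 1 ≤ t ∧ t ≤ n ∧ x ≤ t * klB (Ssum W t ω / t) p} ⊆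
      {ω | ∃ t : ℕ, 1 ≤ t ∧ t ≤ n ∧ p ≤ Ssum W t ω / t ∧
        x ≤ t * klB (Ssum W t ω / t) p} ∪
      {ω | ∃ t : ℕ, 1 ≤ t ∧ t ≤ n ∧ (1 - p) ≤ Ssum W' t ω / t ∧
        x ≤ t * klB (Ssum W' t ω / t) (1 - p)} := by
    rintro ω ⟨t, ht1, htn, hkl⟩
    have ht0 : (0:ℝ) < t := by exact_mod_cast ht1
    have hS' : Ssum W' t ω = t - Ssum W t ω := by
      simp [hW'def, Ssum, Finset.sum_sub_distrib]
    have hμ' : Ssum W' t ω / t = 1 - Ssum W t ω / t := by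
      rw [hS']
      field_simp
    rcases le_total p (Ssum W t ω / t) with h | h
    · exact Or.inl ⟨t, ht1, htn, h, hkl⟩
    · refine Or.inr ⟨t, ht1, htn, ?_, ?_⟩
      · rw [hμ']; linarith
      · rw [hμ', klB_symm]
        exact hkl
  refine (measure_mono hsplit).trans ((measure_union_le _ _).trans ?_)
  have h1 := tail_upper hWmeas hindep hW01 hp0 hp1 hW1 hx hn
  have h2 := tail_upper hW'meas hW'indep hW'01 (by linarith) (by linarith) hW'1 hx hn
  calc _ ≤ ENNReal.ofReal ((x * Real.log n + 1) * Real.exp (1 - x)) +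
      ENNReal.ofReal ((x * Real.log n + 1) * Real.exp (1 - x)) := add_le_add h1 h2
  _ = ENNReal.ofReal (2 * ((x * Real.log n + 1) * Real.exp (1 - x))) := by
      rw [← ENNReal.ofReal_add hbnn hbnn]
      congr 1
      ring

end SanovAux

open SanovAux

/-- **Sanov-type self-normalized deviation bound for the empirical distribution** of
i.i.d. random variables `X₁, X₂, …` with values in a finite set `A` and common law `P₀`
(here `X s` denotes the `(s+1)`-th variable, so that the empirical distribution after `t`
observations is `P̂_t(a) = (Σ_{s<t} 1{X s = a})/t`):
`P(∃ t ∈ {1,…,n}, t · KL(P̂_t; P₀) ≤ 2e (δ log n + |A|) exp(-δ/|A|)`. -/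
theorem sanov_self_normalized_bound
    {Ω : Type*} {mΩ : MeasurableSpace Ω} {P : Measure Ω} [IsProbabilityMeasure P]
    {A : Type*} [Fintype A] [MeasurableSpace A] [MeasurableSingletonClass A]
    (X : ℕ → Ω → A) (hmeas : ∀ t, Measurable (X t))
    (hindep : iIndepFun X P)
    (P0 : A → ℝ) (hP0 : ∀ a, 0 ≤ P0 a) (hP0sum : ∑ a, P0 a = 1)
    (hlaw : ∀ t a, P {ω | X t ω = a} = ENNReal.ofReal (P0 a))
    (δ : ℝ) (hδ : 0 < δ) (n : ℕ) (hn : 1 ≤ n) :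
    P {ω | ∃ t ∈ Finset.Icc 1 n,
        ENNReal.ofReal δ ≤ (t : ℝ≥0∞) *
          klFin (fun a => (∑ s ∈ Finset.range t, if X s ω = a then (1 : ℝ) else 0) / t) P0} ≤
      ENNReal.ofReal (2 * Real.exp 1 * (δ * Real.log n + Fintype.card A) *
        Real.exp (-δ / Fintype.card A)) := by
  classical
  set k := Fintype.card A with hk
  have hk0 : k ≠ 0 := by
    intro h0
    have hempty : IsEmpty A := Fintype.card_eq_zero_iff.mp h0
    rw [Finset.univ_eq_empty, Finset.sum_empty] at hP0sum
    norm_num at hP0sum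
  have hkR : (0:ℝ) < k := by exact_mod_cast Nat.pos_of_ne_zero hk0
  have hlogn : (0:ℝ) ≤ Real.log n := Real.log_nonneg (by exact_mod_cast hn)
  set x := δ / k with hxdef
  have hx0 : 0 < x := div_pos hδ hkR
  have hnegx : -δ / (k:ℝ) = -x := by rw [hxdef, neg_div]
  by_cases hxle : x ≤ 1
  · -- trivial case: the claimed bound is at least 1
    refine le_trans prob_le_one ?_
    rw [show (1:ℝ≥0∞) = ENNReal.ofReal 1 by simp]
    apply ENNReal.ofReal_le_ofReal
    have h1k : (1:ℝ) ≤ k := by exact_mod_cast Nat.one_le_iff_ne_zero.mpr hk0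
    have h1 : (1:ℝ) ≤ δ * Real.log n + k := by nlinarith [mul_nonneg hδ.le hlogn]
    have h2 : Real.exp (-1) ≤ Real.exp (-δ / k) := by
      rw [hnegx, Real.exp_le_exp]
      linarith
    have h3 : Real.exp 1 * Real.exp (-1) = 1 := by
      rw [← Real.exp_add]
      simp
    nlinarith [Real.exp_pos (1:ℝ), Real.exp_pos (-δ/(k:ℝ)), Real.exp_pos (-1:ℝ),
      mul_le_mul_of_nonneg_left h2 (Real.exp_pos (1:ℝ)).le]
  push_neg at hxle
  -- the 0/1 variables
  set Wf : A → ℕ → Ω → ℝ := fun a s ω => if X s ω = a then (1:ℝ) else 0 with hWfdef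
  set supp : Finset A := Finset.univ.filter (fun a => 0 < P0 a) with hsuppdef
  set G : Set Ω := {ω | ∀ s, s < n → 0 < P0 (X s ω)} with hGdef
  have hGc : P Gᶜ = 0 := by
    have hsub : Gᶜ ⊆ ⋃ s ∈ Finset.range n, ⋃ a ∈ Finset.univ.filter (fun a => P0 a = 0),
        {ω | X s ω = a} := by
      intro ω hω
      simp only [hGdef, Set.mem_compl_iff, Set.mem_setOf_eq, not_forall] at hω
      obtain ⟨s, hs, hns⟩ := hω
      refine Set.mem_biUnion (Finset.mem_range.mpr hs) ?_
      refine Set.mem_biUnion (Finset.mem_filter.mpr ⟨Finset.mem_univ _, ?_⟩) rfl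
      exact le_antisymm (not_lt.mp hns) (hP0 _)
    have hle : P Gᶜ ≤ ∑ s ∈ Finset.range n,
        ∑ a ∈ Finset.univ.filter (fun a => P0 a = 0), P {ω | X s ω = a} :=
      (measure_mono hsub).trans ((measure_biUnion_finset_le _ _).trans
        (Finset.sum_le_sum fun s _ => measure_biUnion_finset_le _ _))
    have hz : ∀ s ∈ Finset.range n,
        ∑ a ∈ Finset.univ.filter (fun a => P0 a = 0), P {ω | X s ω = a} = 0 := by
      intro s _
      apply Finset.sum_eq_zero
      intro a ha
      rw [hlaw s a, (Finset.mem_filter.mp ha).2, ENNReal.ofReal_zero]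
    rw [Finset.sum_congr rfl hz, Finset.sum_const, smul_zero] at hle
    exact le_antisymm hle zero_le
  set Ev : Set Ω := {ω | ∃ t ∈ Finset.Icc 1 n,
      ENNReal.ofReal δ ≤ (t : ℝ≥0∞) *
        klFin (fun a => (∑ s ∈ Finset.range t, if X s ω = a then (1 : ℝ) else 0) / t) P0}
    with hEvdef
  set Ea : A → Set Ω := fun a => {ω | ∃ t : ℕ, 1 ≤ t ∧ t ≤ n ∧
      x ≤ t * klB (Ssum (Wf a) t ω / t) (P0 a)} with hEadef
  have hsupp_sum : ∑ a ∈ supp, P0 a = 1 := by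
    rw [← hP0sum]
    apply Finset.sum_subset (Finset.filter_subset _ _)
    intro a _ ha
    simp only [Finset.mem_filter, Finset.mem_univ, true_and, not_lt] at ha
    exact le_antisymm ha (hP0 a)
  have hsuppne : supp.Nonempty := by
    by_contra h
    rw [Finset.not_nonempty_iff_eq_empty] at h
    rw [h, Finset.sum_empty] at hsupp_sum
    norm_num at hsupp_sum
  have hcard0 : (0:ℝ) < supp.card := by exact_mod_cast Finset.card_pos.mpr hsuppne
  have hcardk : (supp.card : ℝ) ≤ k := by
    rw [hk]
    exact_mod_cast Finset.card_le_univ supp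
  have hP0le1 : ∀ a, P0 a ≤ 1 := by
    intro a
    rw [← hP0sum]
    exact Finset.single_le_sum (fun b _ => hP0 b) (Finset.mem_univ a)
  have hEG : Ev ∩ G ⊆ ⋃ a ∈ supp, Ea a := by
    rintro ω ⟨hωE, hωG⟩
    rw [hEvdef, Set.mem_setOf_eq] at hωE
    obtain ⟨t, htmem, hev⟩ := hωE
    rw [Finset.mem_Icc] at htmem
    obtain ⟨ht1, htn⟩ := htmem
    have ht0 : (0:ℝ) < t := by exact_mod_cast ht1
    set phat : A → ℝ := fun a => (∑ s ∈ Finset.range t, if X s ω = a then (1:ℝ) else 0) / t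
      with hphatdef
    have hphat_eq : ∀ a, phat a = Ssum (Wf a) t ω / t := fun a => rfl
    have habs : ∀ a, P0 a = 0 → phat a = 0 := by
      intro a ha0
      show (∑ s ∈ Finset.range t, if X s ω = a then (1:ℝ) else 0) / (t:ℝ) = 0
      have hzz : ∀ s ∈ Finset.range t, (if X s ω = a then (1:ℝ) else 0) = 0 := by
        intro s hs
        rw [if_neg]
        intro heq
        have := hωG s (lt_of_lt_of_le (Finset.mem_range.mp hs) htn)
        rw [heq, ha0] at this
        norm_num at this
      rw [Finset.sum_congr rfl hzz, Finset.sum_const, smul_zero, zero_div]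
    set KL : ℝ := ∑ a, phat a * Real.log (phat a / P0 a) with hKLdef
    have hklfin : klFin phat P0 = ENNReal.ofReal KL := by
      rw [klFin, if_pos habs]
    rw [hklfin] at hev
    have hKLpos : 0 < KL := by
      by_contra hcon
      push_neg at hcon
      rw [ENNReal.ofReal_eq_zero.mpr hcon, mul_zero, nonpos_iff_eq_zero,
        ENNReal.ofReal_eq_zero] at hev
      linarith
    have hev' : δ ≤ t * KL := by
      rw [show ((t:ℕ) : ℝ≥0∞) = ENNReal.ofReal (t:ℝ) by rw [ENNReal.ofReal_natCast],
        ← ENNReal.ofReal_mul (Nat.cast_nonneg t)] at hev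
      exact (ENNReal.ofReal_le_ofReal_iff (by positivity)).mp hev
    have hphat_nonneg : ∀ a, 0 ≤ phat a := by
      intro a
      show 0 ≤ (∑ s ∈ Finset.range t, if X s ω = a then (1:ℝ) else 0) / (t:ℝ)
      apply div_nonneg _ ht0.le
      apply Finset.sum_nonneg
      intro s _
      split_ifs <;> norm_num
    have hphat_sum : ∑ a, phat a = 1 := by
      show (∑ a, (∑ s ∈ Finset.range t, if X s ω = a then (1:ℝ) else 0) / (t:ℝ)) = 1
      rw [← Finset.sum_div, Finset.sum_comm]
      have hone : ∀ s ∈ Finset.range t, (∑ a, if X s ω = a then (1:ℝ) else 0) = 1 := by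
        intro s _
        rw [Finset.sum_ite_eq Finset.univ (X s ω) (fun _ => (1:ℝ))]
        simp
      rw [Finset.sum_congr rfl hone, Finset.sum_const, Finset.card_range, nsmul_eq_mul,
        mul_one, div_self ht0.ne']
    have hphat_le1 : ∀ a, phat a ≤ 1 := by
      intro a
      rw [← hphat_sum]
      exact Finset.single_le_sum (fun b _ => hphat_nonneg b) (Finset.mem_univ a)
    have hphat_supp : ∑ a ∈ supp, phat a = 1 := by
      rw [← hphat_sum]
      apply Finset.sum_subset (Finset.filter_subset _ _)
      intro a _ ha
      simp only [Finset.mem_filter, Finset.mem_univ, true_and, not_lt] at ha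
      exact habs a (le_antisymm ha (hP0 a))
    have hKLsum : KL = ∑ a ∈ supp, phat a * Real.log (phat a / P0 a) := by
      rw [hKLdef]
      symm
      apply Finset.sum_subset (Finset.filter_subset _ _)
      intro a _ ha
      simp only [Finset.mem_filter, Finset.mem_univ, true_and, not_lt] at ha
      rw [habs a (le_antisymm ha (hP0 a)), zero_mul]
    have hgibbs : 0 ≤ ∑ a ∈ supp, (1 - phat a) * Real.log ((1 - phat a) / (1 - P0 a)) := by
      apply gibbs supp (fun a => 1 - phat a) (fun a => 1 - P0 a)
      · exact fun a _ => by linarith [hphat_le1 a]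
      · exact fun a _ => by linarith [hP0le1 a]
      · intro a ha hb
        have hPa1 : P0 a = 1 := by linarith
        have hothers : ∀ b, b ≠ a → P0 b = 0 := by
          intro b hb'
          have h1 : P0 a + ∑ c ∈ Finset.univ.erase a, P0 c = 1 := by
            rw [Finset.add_sum_erase _ _ (Finset.mem_univ a)]
            exact hP0sum
          have h2 : ∑ c ∈ Finset.univ.erase a, P0 c = 0 := by linarith
          exact (Finset.sum_eq_zero_iff_of_nonneg
            (fun c _ => hP0 c)).mp h2 b (Finset.mem_erase.mpr ⟨hb', Finset.mem_univ b⟩)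
        have hphat1 : phat a = 1 := by
          have h1 : phat a + ∑ c ∈ Finset.univ.erase a, phat c = 1 := by
            rw [Finset.add_sum_erase _ _ (Finset.mem_univ a)]
            exact hphat_sum
          have h2 : ∑ c ∈ Finset.univ.erase a, phat c = 0 := by
            apply Finset.sum_eq_zero
            intro c hc
            exact habs c (hothers c (Finset.mem_erase.mp hc).1)
          linarith
        rw [hphat1]
        ring
      · rw [Finset.sum_sub_distrib, Finset.sum_sub_distrib, hphat_supp, hsupp_sum]
    have hKLle : KL ≤ ∑ a ∈ supp, klB (phat a) (P0 a) := by
      rw [hKLsum]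
      have hsplitkl : ∑ a ∈ supp, klB (phat a) (P0 a) =
          (∑ a ∈ supp, phat a * Real.log (phat a / P0 a)) +
          ∑ a ∈ supp, (1 - phat a) * Real.log ((1 - phat a) / (1 - P0 a)) := by
        rw [← Finset.sum_add_distrib]
        apply Finset.sum_congr rfl
        intro a _
        rfl
      rw [hsplitkl]
      linarith
    obtain ⟨a, hasupp, hxa'⟩ : ∃ a ∈ supp, δ / (supp.card : ℝ) ≤ t * klB (phat a) (P0 a) := by
      by_contra hcon
      push_neg at hcon
      have hlt : ∑ a ∈ supp, (t:ℝ) * klB (phat a) (P0 a) <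
          ∑ _a ∈ supp, δ / (supp.card : ℝ) :=
        Finset.sum_lt_sum_of_nonempty hsuppne hcon
      rw [Finset.sum_const, nsmul_eq_mul, mul_div_cancel₀ _ hcard0.ne'] at hlt
      have h2 : (t:ℝ) * KL ≤ ∑ a ∈ supp, (t:ℝ) * klB (phat a) (P0 a) := by
        rw [← Finset.mul_sum]
        exact mul_le_mul_of_nonneg_left hKLle ht0.le
      linarith
    have hxa : x ≤ t * klB (phat a) (P0 a) := by
      refine le_trans ?_ hxa'
      rw [hxdef]
      exact div_le_div_of_nonneg_left hδ.le hcard0 hcardk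
    refine Set.mem_biUnion hasupp ?_
    rw [hEadef]
    exact ⟨t, ht1, htn, by rw [← hphat_eq a]; exact hxa⟩
  have hEa_bound : ∀ a ∈ supp, P (Ea a) ≤
      ENNReal.ofReal (2 * ((x * Real.log n + 1) * Real.exp (1 - x))) := by
    intro a hasupp
    have hpa0 : 0 < P0 a := (Finset.mem_filter.mp hasupp).2
    rcases lt_or_eq_of_le (hP0le1 a) with hpa1 | hpa1
    · have hWmeas : ∀ s, Measurable (Wf a s) := by
        intro s
        have hin : Wf a s = Set.indicator ((X s) ⁻¹' {a}) (fun _ => (1:ℝ)) := by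
          funext ω
          rw [hWfdef, Set.indicator_apply]
          simp [Set.mem_preimage]
        rw [hin]
        exact measurable_const.indicator ((hmeas s) (measurableSet_singleton a))
      have hW01 : ∀ s ω, Wf a s ω = 0 ∨ Wf a s ω = 1 := by
        intro s ω
        rw [hWfdef]
        dsimp only
        split_ifs <;> simp
      have hWindep : iIndepFun (Wf a) P := by
        apply hindep.comp (fun s => fun y : A => if y = a then (1:ℝ) else 0)
        intro s
        have hin : (fun y : A => if y = a then (1:ℝ) else 0) =
            Set.indicator {a} (fun _ => (1:ℝ)) := by
          funext y
          rw [Set.indicator_apply]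
          simp
        rw [hin]
        exact measurable_const.indicator (measurableSet_singleton a)
      have hW1 : ∀ s, P {ω | Wf a s ω = 1} = ENNReal.ofReal (P0 a) := by
        intro s
        have hset : {ω | Wf a s ω = 1} = {ω | X s ω = a} := by
          ext ω
          rw [hWfdef]
          simp only [Set.mem_setOf_eq]
          split_ifs with h
          · simp [h]
          · simp [h]
        rw [hset, hlaw s a]
      exact tail_two_sided hWmeas hWindep hW01 hpa0 hpa1 hW1 hxle hn
    · have hempty : Ea a = ∅ := by
        rw [hEadef]
        ext ω
        simp only [Set.mem_setOf_eq, Set.mem_empty_iff_false, iff_false]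
        rintro ⟨t, ht1, htn, hkl⟩
        have ht0 : (0:ℝ) < t := by exact_mod_cast ht1
        have hμ0 : 0 ≤ Ssum (Wf a) t ω / t := by
          apply div_nonneg _ ht0.le
          apply Finset.sum_nonneg
          intro s _
          rw [hWfdef]
          dsimp only
          split_ifs <;> norm_num
        have hμ1 : Ssum (Wf a) t ω / t ≤ 1 := by
          rw [div_le_one ht0]
          calc Ssum (Wf a) t ω ≤ ∑ s ∈ Finset.range t, (1:ℝ) := by
                apply Finset.sum_le_sum
                intro s _
                rw [hWfdef]
                dsimp only
                split_ifs <;> norm_num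
          _ = t := by simp
        have hkl0 := klB_at_one_arg hμ0 hμ1
        rw [← hpa1] at hkl0
        nlinarith
      rw [hempty]
      simp
  have hmain : P Ev ≤ P (Ev ∩ G) + P Gᶜ := by
    refine (measure_mono ?_).trans (measure_union_le _ _)
    intro ω hω
    by_cases hg : ω ∈ G
    · exact Or.inl ⟨hω, hg⟩
    · exact Or.inr hg
  rw [hGc, add_zero] at hmain
  refine hmain.trans ((measure_mono hEG).trans ((measure_biUnion_finset_le _ _).trans ?_))
  calc ∑ a ∈ supp, P (Ea a)
      ≤ ∑ _a ∈ supp, ENNReal.ofReal (2 * ((x * Real.log n + 1) * Real.exp (1 - x))) :=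
        Finset.sum_le_sum hEa_bound
  _ = (supp.card : ℝ≥0∞) * ENNReal.ofReal (2 * ((x * Real.log n + 1) * Real.exp (1 - x))) := by
        rw [Finset.sum_const, nsmul_eq_mul]
  _ ≤ ENNReal.ofReal (2 * Real.exp 1 * (δ * Real.log n + k) * Real.exp (-δ / k)) := by
        rw [← ENNReal.ofReal_natCast supp.card, ← ENNReal.ofReal_mul (Nat.cast_nonneg _)]
        apply ENNReal.ofReal_le_ofReal
        have hexp1x : Real.exp (1 - x) = Real.exp 1 * Real.exp (-x) := by
          rw [← Real.exp_add]
          ring_nf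
        rw [hnegx, hexp1x]
        have hkx : (k:ℝ) * x = δ := by
          rw [hxdef]
          field_simp
        have h0xln : (0:ℝ) ≤ x * Real.log n + 1 := by positivity
        have hsc : (supp.card : ℝ) * (2 * ((x * Real.log n + 1) * (Real.exp 1 * Real.exp (-x))))
            ≤ (k:ℝ) * (2 * ((x * Real.log n + 1) * (Real.exp 1 * Real.exp (-x)))) := by
          apply mul_le_mul_of_nonneg_right hcardk
          positivity
        refine hsc.trans (le_of_eq ?_)
        rw [← hkx]
        ring
end
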